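/- For any Hermitian matrix X on the bipartite space ℂ^{d_A}⊗ℂ^{d_B}, the trace norm of the partial transpose satisfies ‖X^{T_B}‖₁ ≤ d_B · ‖X‖₁. -/

import Mathlib

open scoped BigOperators ComplexOrder

noncomputable section

/-- Bipartite matrices on `ℂ^{IA} ⊗ ℂ^{IB}`, indexed by pairs. -/
abbrev BMat (IA IB : Type) : Type := Matrix (IA × IB) (IA × IB) ℂ

/-- Partial transpose on the `B` system: `(X^{T_B})_{(i,j),(k,l)} = X_{(i,l),(k,j)}`. -/
def ptB {IA IB : Type} (X : BMat IA IB) : BMat IA IB :=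
  fun p q => X (p.1, q.2) (q.1, p.2)

/-- Trace norm `‖X‖₁ = tr √(X† X)`. -/
noncomputable def traceNorm {n : Type} [Fintype n] [DecidableEq n]
    (X : Matrix n n ℂ) : ℝ :=
  (((Matrix.isHermitian_conjTranspose_mul_self X).eigenvectorUnitary.1 *
      Matrix.diagonal ((fun r : ℝ => (r : ℂ)) ∘ (Real.sqrt ·) ∘ (Matrix.isHermitian_conjTranspose_mul_self X).eigenvalues) *
      (star (Matrix.isHermitian_conjTranspose_mul_self X).eigenvectorUnitary : Matrix n n ℂ)).trace).re

/-- Operator norm (largest singular value). -/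
noncomputable def opNorm {n : Type} [Fintype n] [DecidableEq n] (X : Matrix n n ℂ) : ℝ :=
  ‖Matrix.toEuclideanCLM (𝕜 := ℂ) X‖

/-- Logarithmic negativity `E_N(X) = log₂ ‖X^{T_B}‖₁`. -/
noncomputable def EN {IA IB : Type} [Fintype IA] [Fintype IB] [DecidableEq IA] [DecidableEq IB]
    (X : BMat IA IB) : ℝ :=
  Real.logb 2 (traceNorm (ptB X))

/-- The extension `id_k ⊗ f` of a map on matrices, acting blockwise. -/
def extMap {I J : Type} (f : Matrix I I ℂ → Matrix J J ℂ) (k : ℕ)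
    (M : Matrix (Fin k × I) (Fin k × I) ℂ) : Matrix (Fin k × J) (Fin k × J) ℂ :=
  fun p q => f (fun i i' => M (p.1, i) (q.1, i')) p.2 q.2

/-- A map on matrices is completely positive if all its extensions `id_k ⊗ f`
map positive semidefinite matrices to positive semidefinite matrices. -/
def CompletelyPositive {I J : Type} [Fintype I] [Fintype J]
    (f : Matrix I I ℂ → Matrix J J ℂ) : Prop :=
  ∀ (k : ℕ) (M : Matrix (Fin k × I) (Fin k × I) ℂ), M.PosSemidef → (extMap f k M).PosSemidef

/-- A PPTq operation: a Hermitian-preserving, trace-preserving linear map `N`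
such that `T_{B'} ∘ N ∘ T_B` is completely positive. -/
def IsPPTq {IA IB JA JB : Type} [Fintype IA] [Fintype IB] [Fintype JA] [Fintype JB]
    (N : BMat IA IB →ₗ[ℂ] BMat JA JB) : Prop :=
  (∀ X : BMat IA IB, X.IsHermitian → (N X).IsHermitian) ∧
  (∀ X : BMat IA IB, (N X).trace = X.trace) ∧
  CompletelyPositive (fun X => ptB (N (ptB X)))

/-- A bipartite quasi-state: Hermitian with trace one. -/
def IsQuasiState {IA IB : Type} [Fintype IA] [Fintype IB] (ρ : BMat IA IB) : Prop :=
  ρ.IsHermitian ∧ ρ.trace = 1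

/-- A bipartite quantum state: positive semidefinite with trace one. -/
def IsState {IA IB : Type} [Fintype IA] [Fintype IB] (ρ : BMat IA IB) : Prop :=
  ρ.PosSemidef ∧ ρ.trace = 1

/-- The maximally entangled state `Φ^d = (1/d) ∑_{i,j} |ii⟩⟨jj|`. -/
noncomputable def MES (d : ℕ) : BMat (Fin d) (Fin d) :=
  fun p q => if p.1 = p.2 ∧ q.1 = q.2 then (1 : ℂ) / d else 0

/-- `n`-fold tensor (Kronecker) power, with all `A` factors grouped against all `B` factors. -/
def tensorPow {IA IB : Type} (ρ : BMat IA IB) (n : ℕ) :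
    BMat (Fin n → IA) (Fin n → IB) :=
  fun p q => ∏ i : Fin n, ρ (p.1 i, p.2 i) (q.1 i, q.2 i)

/-- Tensor (Kronecker) product of two bipartite matrices, grouping `A` systems together
and `B` systems together. -/
def tensorMul {IA IB JA JB : Type} (ρ : BMat IA IB) (σ : BMat JA JB) :
    BMat (IA × JA) (IB × JB) :=
  fun p q => ρ (p.1.1, p.2.1) (q.1.1, q.2.1) * σ (p.1.2, p.2.2) (q.1.2, q.2.2)

/-- One-shot exact distillable entanglement under PPTq operations. -/
noncomputable def oneShotDistill {IA IB : Type} [Fintype IA] [Fintype IB]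
    (ρ : BMat IA IB) : ℝ :=
  sSup { x : ℝ | ∃ d : ℕ, 0 < d ∧ x = Real.logb 2 d ∧
    ∃ Λ : BMat IA IB →ₗ[ℂ] BMat (Fin d) (Fin d), IsPPTq Λ ∧ Λ ρ = MES d }

/-- One-shot exact entanglement cost under PPTq operations. -/
noncomputable def oneShotCost {IA IB : Type} [Fintype IA] [Fintype IB]
    (ρ : BMat IA IB) : ℝ :=
  sInf { x : ℝ | ∃ d : ℕ, 0 < d ∧ x = Real.logb 2 d ∧
    ∃ Λ : BMat (Fin d) (Fin d) →ₗ[ℂ] BMat IA IB, IsPPTq Λ ∧ Λ (MES d) = ρ }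

/-- The one-shot distillation error for `n` copies towards `Φ^d`, optimized over PPTq operations. -/
noncomputable def distillErr {IA IB : Type} [Fintype IA] [Fintype IB]
    [DecidableEq IA] [DecidableEq IB] (ρ : BMat IA IB) (n d : ℕ) : ℝ :=
  sInf { e : ℝ | ∃ Λ : BMat (Fin n → IA) (Fin n → IB) →ₗ[ℂ] BMat (Fin d) (Fin d),
    IsPPTq Λ ∧ e = traceNorm (Λ (tensorPow ρ n) - MES d) }

/-- The one-shot dilution error for preparing `n` copies from `Φ^d`, optimized over PPTq operations. -/
noncomputable def costErr {IA IB : Type} [Fintype IA] [Fintype IB]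
    [DecidableEq IA] [DecidableEq IB] (ρ : BMat IA IB) (n d : ℕ) : ℝ :=
  sInf { e : ℝ | ∃ Λ : BMat (Fin d) (Fin d) →ₗ[ℂ] BMat (Fin n → IA) (Fin n → IB),
    IsPPTq Λ ∧ e = traceNorm (tensorPow ρ n - Λ (MES d)) }

/-- Distillable entanglement under PPTq operations (asymptotically vanishing error). -/
noncomputable def EDppt {IA IB : Type} [Fintype IA] [Fintype IB]
    [DecidableEq IA] [DecidableEq IB] (ρ : BMat IA IB) : ℝ :=
  sSup { r : ℝ | Filter.Tendsto (fun n : ℕ => distillErr ρ n (2 ^ ⌊r * n⌋₊))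
    Filter.atTop (nhds 0) }

/-- Entanglement cost under PPTq operations (asymptotically vanishing error). -/
noncomputable def ECppt {IA IB : Type} [Fintype IA] [Fintype IB]
    [DecidableEq IA] [DecidableEq IB] (ρ : BMat IA IB) : ℝ :=
  sInf { r : ℝ | Filter.Tendsto (fun n : ℕ => costErr ρ n (2 ^ ⌈r * n⌉₊))
    Filter.atTop (nhds 0) }

/-- Tempered negativity `N_τ(σ | ρ)`. -/
noncomputable def temperedNeg {IA IB : Type} [Fintype IA] [Fintype IB]
    [DecidableEq IA] [DecidableEq IB] (σ ρ : BMat IA IB) : ℝ :=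
  sSup { t : ℝ | ∃ X : Matrix (IA × IB) (IA × IB) ℂ, X.IsHermitian ∧
    opNorm (ptB X) ≤ 1 ∧ (X * ρ).trace = (opNorm X : ℂ) ∧ (X * σ).trace = (t : ℂ) }

/-- Asymptotic exact conversion rate under PPTq operations. -/
noncomputable def convRate {IA IB JA JB : Type} [Fintype IA] [Fintype IB]
    [Fintype JA] [Fintype JB]
    (ρ : BMat IA IB) (σ : BMat JA JB) : ℝ :=
  sSup { r : ℝ | 0 ≤ r ∧ ∀ᶠ n : ℕ in Filter.atTop,
    ∃ Λ : BMat (Fin n → IA) (Fin n → IB) →ₗ[ℂ]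
          BMat (Fin ⌊r * n⌋₊ → JA) (Fin ⌊r * n⌋₊ → JB),
      IsPPTq Λ ∧ Λ (tensorPow ρ n) = tensorPow σ ⌊r * n⌋₊ }


namespace TNP
open Matrix
open scoped ComplexOrder

variable {n : Type} [Fintype n] [DecidableEq n]

lemma sandwich_mul {V : Matrix n n ℂ} (hV : Vᴴ * V = 1) (f g : n → ℂ) :
    (V * diagonal f * Vᴴ) * (V * diagonal g * Vᴴ) = V * diagonal (fun i => f i * g i) * Vᴴ := by
  have h1 : Vᴴ * (V * (diagonal g * Vᴴ)) = diagonal g * Vᴴ := by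
    rw [← mul_assoc, hV, one_mul]
  simp only [mul_assoc, h1]
  rw [← mul_assoc (diagonal f), diagonal_mul_diagonal]

lemma sandwich_conjTranspose (V : Matrix n n ℂ) (f : n → ℂ) :
    (V * diagonal f * Vᴴ)ᴴ = V * diagonal (fun i => starRingEnd ℂ (f i)) * Vᴴ := by
  simp [conjTranspose_mul, diagonal_conjTranspose, mul_assoc]
  rfl

lemma eigU_star_mul {A : Matrix n n ℂ} (hA : A.IsHermitian) :
    (hA.eigenvectorUnitary : Matrix n n ℂ)ᴴ * (hA.eigenvectorUnitary : Matrix n n ℂ) = 1 := by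
  rw [← Matrix.star_eq_conjTranspose]; exact Unitary.coe_star_mul_self hA.eigenvectorUnitary

lemma eigU_mul_star {A : Matrix n n ℂ} (hA : A.IsHermitian) :
    (hA.eigenvectorUnitary : Matrix n n ℂ) * (hA.eigenvectorUnitary : Matrix n n ℂ)ᴴ = 1 := by
  rw [← Matrix.star_eq_conjTranspose]; exact Unitary.coe_mul_star_self hA.eigenvectorUnitary

lemma spectral {A : Matrix n n ℂ} (hA : A.IsHermitian) :
    A = (hA.eigenvectorUnitary : Matrix n n ℂ) * diagonal (fun i => (hA.eigenvalues i : ℂ))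
      * (hA.eigenvectorUnitary : Matrix n n ℂ)ᴴ := by
  simpa [Function.comp_def, Matrix.star_eq_conjTranspose] using hA.spectral_theorem

/-- The trace norm of a Hermitian matrix is the sum of the absolute values of its
eigenvalues. -/
lemma traceNorm_hermitian {A : Matrix n n ℂ} (hA : A.IsHermitian) :
    traceNorm A = ∑ i, |hA.eigenvalues i| := by
  have hAA := Matrix.isHermitian_conjTranspose_mul_self A
  have e1 : traceNorm A = ((cfc Real.sqrt (Aᴴ * A)).trace).re := by
    rw [hAA.cfc_eq]; rfl
  have e2 : Aᴴ * A = cfc (fun x : ℝ => x * x) A := by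
    rw [cfc_mul (fun x : ℝ => x) (fun x : ℝ => x) A, cfc_id' ℝ A, hA.eq]
  have e3 : cfc Real.sqrt (Aᴴ * A) = cfc (fun x : ℝ => |x|) A := by
    rw [e2, ← cfc_comp Real.sqrt (fun x : ℝ => x * x) A]
    congr 1; funext x; exact Real.sqrt_mul_self_eq_abs x
  have hV : (hA.eigenvectorUnitary : Matrix n n ℂ)ᴴ * _ = 1 := eigU_star_mul hA
  rw [e1, e3, hA.cfc_eq, IsHermitian.cfc, Unitary.conjStarAlgAut_apply, Matrix.star_eq_conjTranspose,
    Matrix.trace_mul_cycle, hV, one_mul, trace_diagonal, Complex.re_sum]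
  simp

lemma diag_abs_le_one {Q : Matrix n n ℂ} (hQ : Qᴴ * Q = 1) (i : n) :
    ‖Q i i‖ ≤ 1 := by
  have h1 : ∑ k, Complex.normSq (Q k i) = 1 := by
    have := congrArg (fun M : Matrix n n ℂ => (M i i).re) hQ
    simpa [Matrix.mul_apply, Matrix.one_apply, Complex.re_sum, conjTranspose_apply,
      Complex.normSq_eq_conj_mul_self, Complex.normSq_apply] using this
  have h2 : Complex.normSq (Q i i) ≤ 1 := by
    rw [← h1]
    exact Finset.single_le_sum (f := fun k => Complex.normSq (Q k i))
      (fun k _ => Complex.normSq_nonneg _) (Finset.mem_univ i)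
  have h3 : ‖Q i i‖ ^ 2 ≤ 1 := by rw [Complex.sq_norm]; exact h2
  nlinarith [norm_nonneg (Q i i)]

lemma mul3_isometry {P Q R : Matrix n n ℂ} (hP : Pᴴ * P = 1) (hQ : Qᴴ * Q = 1)
    (hR : Rᴴ * R = 1) : (P * Q * R)ᴴ * (P * Q * R) = 1 := by
  have h1 : Pᴴ * (P * (Q * R)) = Q * R := by rw [← mul_assoc, hP, one_mul]
  have h2 : Qᴴ * (Q * R) = R := by rw [← mul_assoc, hQ, one_mul]
  simp only [conjTranspose_mul, mul_assoc, h1, h2, hR]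

lemma trace_mul_diag (Q : Matrix n n ℂ) (f : n → ℂ) :
    (Q * diagonal f).trace = ∑ i, Q i i * f i := by
  simp [Matrix.trace, Matrix.diag, mul_diagonal]

/-- Dual bound: for an isometry `U` and Hermitian `A`, `Re tr (U A) ≤ ‖A‖₁`. -/
lemma re_trace_mul_le {A U : Matrix n n ℂ} (hA : A.IsHermitian) (hU : Uᴴ * U = 1) :
    ((U * A).trace).re ≤ traceNorm A := by
  set V : Matrix n n ℂ := (hA.eigenvectorUnitary : Matrix n n ℂ) with hVdef
  set Q : Matrix n n ℂ := Vᴴ * U * V with hQdef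
  have hQiso : Qᴴ * Q = 1 := by
    refine mul3_isometry ?_ hU (eigU_star_mul hA)
    rw [conjTranspose_conjTranspose]; exact eigU_mul_star hA
  have htr : (U * A).trace = ∑ i, Q i i * (hA.eigenvalues i : ℂ) := by
    conv_lhs => rw [spectral hA]
    rw [show U * (V * diagonal (fun i => (hA.eigenvalues i : ℂ)) * Vᴴ)
        = (U * V * diagonal (fun i => (hA.eigenvalues i : ℂ))) * Vᴴ by
      simp only [mul_assoc]]
    rw [Matrix.trace_mul_comm, show Vᴴ * (U * V * diagonal (fun i => (hA.eigenvalues i : ℂ)))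
        = Q * diagonal (fun i => (hA.eigenvalues i : ℂ)) by simp only [hQdef, mul_assoc]]
    exact trace_mul_diag _ _
  rw [htr, Complex.re_sum, traceNorm_hermitian hA]
  refine Finset.sum_le_sum fun i _ => ?_
  have h1 : ‖Q i i‖ ≤ 1 := diag_abs_le_one hQiso i
  have h2 : |(Q i i).re| ≤ 1 := le_trans (Complex.abs_re_le_norm _) h1
  have h3 : (Q i i * (hA.eigenvalues i : ℂ)).re = (Q i i).re * hA.eigenvalues i := by
    simp [Complex.mul_re]
  rw [h3]
  calc (Q i i).re * hA.eigenvalues i ≤ |(Q i i).re * hA.eigenvalues i| := le_abs_self _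
    _ = |(Q i i).re| * |hA.eigenvalues i| := abs_mul _ _
    _ ≤ 1 * |hA.eigenvalues i| := mul_le_mul_of_nonneg_right h2 (abs_nonneg _)
    _ = |hA.eigenvalues i| := one_mul _

/-- The trace norm of a Hermitian matrix is attained: `‖A‖₁ = Re tr (W A)` for a
unitary `W` (the "sign" of `A`). -/
lemma exists_sign_unitary {A : Matrix n n ℂ} (hA : A.IsHermitian) :
    ∃ W : Matrix n n ℂ, Wᴴ * W = 1 ∧ ((W * A).trace).re = traceNorm A := by
  set V : Matrix n n ℂ := (hA.eigenvectorUnitary : Matrix n n ℂ) with hVdef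
  have hV : Vᴴ * V = 1 := eigU_star_mul hA
  set s : n → ℂ := fun i => if hA.eigenvalues i < 0 then -1 else 1 with hsdef
  refine ⟨V * diagonal s * Vᴴ, ?_, ?_⟩
  · rw [sandwich_conjTranspose, sandwich_mul hV]
    have h : (fun i => starRingEnd ℂ (s i) * s i) = fun _ => (1 : ℂ) := by
      funext i
      simp only [hsdef]
      split <;> simp
    rw [h, diagonal_one, mul_one, eigU_mul_star hA]
  · have key : (V * diagonal s * Vᴴ) * A
        = V * diagonal (fun i => ((|hA.eigenvalues i| : ℝ) : ℂ)) * Vᴴ := by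
      conv_lhs => rw [spectral hA]
      rw [sandwich_mul hV]
      have hfun : (fun i => s i * (hA.eigenvalues i : ℂ))
          = fun i => ((|hA.eigenvalues i| : ℝ) : ℂ) := by
        funext i
        simp only [hsdef]
        split
        · rename_i h
          rw [abs_of_neg h]; push_cast; ring
        · rename_i h
          rw [abs_of_nonneg (not_lt.mp h)]; ring
      rw [hfun]
    rw [key, Matrix.trace_mul_cycle, hV, one_mul, trace_diagonal, traceNorm_hermitian hA]
    rw [← Complex.ofReal_sum]
    exact Complex.ofReal_re _

end TNP

namespace TNP
open Matrix

variable {dA d : ℕ} [NeZero d]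

/-- A `d`-th root of unity. -/
def ω (d : ℕ) : ℂ := Complex.exp (2 * Real.pi * Complex.I / d)

lemma hω : IsPrimitiveRoot (ω d) d := Complex.isPrimitiveRoot_exp d (NeZero.ne d)

lemma ωpow_ne (m : ℕ) : ω d ^ m ≠ 0 := pow_ne_zero _ (hω.ne_zero (NeZero.ne d))

lemma conj_ωpow (m : ℕ) : starRingEnd ℂ (ω d ^ m) = (ω d ^ m)⁻¹ := by
  have h1 : ‖ω d ^ m‖ = 1 := by
    rw [norm_pow, Complex.norm_eq_one_of_pow_eq_one hω.pow_eq_one (NeZero.ne d), one_pow]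
  rw [← Complex.inv_eq_conj h1]

lemma conj_mul_pow (m : ℕ) : starRingEnd ℂ (ω d) ^ m * ω d ^ m = 1 := by
  rw [← map_pow, conj_ωpow, inv_mul_cancel₀ (ωpow_ne _)]

lemma key_b_sum (k j : Fin d) :
    ∑ b : Fin d, ω d ^ (b.val * k.val) * (ω d ^ (b.val * j.val))⁻¹
      = if k = j then (d : ℂ) else 0 := by
  have hterm : ∀ b : Fin d, ω d ^ (b.val * k.val) * (ω d ^ (b.val * j.val))⁻¹
      = (ω d ^ k.val * (ω d ^ j.val)⁻¹) ^ b.val := by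
    intro b
    rw [mul_pow, ← pow_mul, inv_pow, ← pow_mul, mul_comm b.val k.val, mul_comm b.val j.val]
  simp only [hterm]
  rw [Fin.sum_univ_eq_sum_range (fun i => (ω d ^ k.val * (ω d ^ j.val)⁻¹) ^ i)]
  split
  · rename_i h
    subst h
    rw [mul_inv_cancel₀ (ωpow_ne _)]
    simp
  · rename_i h
    have h1 : (ω d ^ k.val) ^ d = 1 := by
      rw [← pow_mul, mul_comm, pow_mul, hω.pow_eq_one, one_pow]
    have h2 : ((ω d ^ j.val)⁻¹) ^ d = 1 := by
      rw [inv_pow, ← pow_mul, mul_comm, pow_mul, hω.pow_eq_one, one_pow, inv_one]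
    have hζd : (ω d ^ k.val * (ω d ^ j.val)⁻¹) ^ d = 1 := by
      rw [mul_pow, h1, h2, mul_one]
    have hζ1 : ω d ^ k.val * (ω d ^ j.val)⁻¹ ≠ 1 := by
      intro hc
      apply h
      rw [← div_eq_mul_inv] at hc
      exact Fin.ext (hω.pow_inj k.isLt j.isLt ((div_eq_one_iff_eq (ωpow_ne _)).mp hc))
    rw [geom_sum_eq hζ1, hζd, sub_self, zero_div]

/-- Shift-and-phase unitaries acting on the `B` factor. -/
def Vm (dA : ℕ) (c b : Fin d) : Matrix (Fin dA × Fin d) (Fin dA × Fin d) ℂ :=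
  fun p r => if r = (p.1, p.2 + c) then ω d ^ (b.val * r.2.val) else 0

def Wm (dA : ℕ) (c b : Fin d) : Matrix (Fin dA × Fin d) (Fin dA × Fin d) ℂ :=
  fun s q => if s = (q.1, q.2 - c) then (ω d ^ (b.val * q.2.val))⁻¹ else 0

lemma Vm_eq (c b : Fin d) (p r : Fin dA × Fin d) :
    Vm dA c b p r = if p = (r.1, r.2 - c) then ω d ^ (b.val * r.2.val) else 0 := by
  have h : (r = (p.1, p.2 + c)) ↔ (p = (r.1, r.2 - c)) := by
    constructor
    · rintro rfl; simp
    · rintro rfl; simp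
  rw [Vm, if_congr h rfl rfl]

lemma shift_inj {a b : Fin dA × Fin d} (c : Fin d)
    (h : (a.1, a.2 - c) = (b.1, b.2 - c)) : a = b := by
  obtain ⟨h1, h2⟩ := Prod.mk.injEq .. ▸ h
  exact Prod.ext h1 (by simpa using sub_left_injective h2)

lemma Vm_isometry (c b : Fin d) :
    (Vm dA c b)ᴴ * Vm dA c b = 1 := by
  ext r r'
  simp only [Matrix.mul_apply, conjTranspose_apply, Vm_eq, Matrix.one_apply]
  simp only [apply_ite (starRingEnd ℂ), map_zero, ite_mul, zero_mul, mul_ite, mul_zero]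
  rw [Finset.sum_ite_eq' Finset.univ ((r'.1, r'.2 - c)) _]
  simp only [Finset.mem_univ, if_true]
  by_cases h : r = r'
  · subst h
    simp [conj_mul_pow]
  · have hne : (r'.1, r'.2 - c) ≠ (r.1, r.2 - c) := fun hc => h (shift_inj c hc).symm
    simp [hne, h]

lemma Wm_isometry (c b : Fin d) :
    (Wm dA c b)ᴴ * Wm dA c b = 1 := by
  ext q q'
  simp only [Matrix.mul_apply, conjTranspose_apply, Wm, Matrix.one_apply]
  simp only [apply_ite (starRingEnd ℂ), map_zero, ite_mul, zero_mul, mul_ite, mul_zero]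
  rw [Finset.sum_ite_eq' Finset.univ ((q'.1, q'.2 - c)) _]
  simp only [Finset.mem_univ, if_true]
  by_cases h : q = q'
  · subst h
    simp only [eq_self_iff_true, if_true, Complex.star_def]
    rw [map_inv₀, conj_ωpow, inv_inv, mul_inv_cancel₀ (ωpow_ne _)]
  · have hne : (q'.1, q'.2 - c) ≠ (q.1, q.2 - c) := fun hc => h (shift_inj c hc).symm
    simp [hne, h]

/-- The partial transpose as a mixture of `d²` unitary conjugation-type terms. -/
lemma decomp (X : BMat (Fin dA) (Fin d)) :
    ∑ c : Fin d, ∑ b : Fin d, Vm dA c b * X * Wm dA c b = (d : ℂ) • ptB X := by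
  ext p q
  have hentry : ∀ c b : Fin d, (Vm dA c b * X * Wm dA c b) p q
      = ω d ^ (b.val * (p.2 + c).val) * X (p.1, p.2 + c) (q.1, q.2 - c)
        * (ω d ^ (b.val * q.2.val))⁻¹ := by
    intro c b
    rw [Matrix.mul_apply]
    have h1 : ∀ s, (Vm dA c b * X) p s * Wm dA c b s q
        = if s = (q.1, q.2 - c) then (Vm dA c b * X) p s * (ω d ^ (b.val * q.2.val))⁻¹
          else 0 := by
      intro s
      rw [Wm]
      split <;> simp
    simp only [h1]
    rw [Finset.sum_ite_eq' Finset.univ ((q.1, q.2 - c)) _]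
    simp only [Finset.mem_univ, if_true]
    congr 1
    rw [Matrix.mul_apply]
    have h2 : ∀ r, Vm dA c b p r * X r (q.1, q.2 - c)
        = if r = (p.1, p.2 + c) then ω d ^ (b.val * r.2.val) * X r (q.1, q.2 - c) else 0 := by
      intro r
      rw [Vm]
      split <;> simp
    simp only [h2]
    rw [Finset.sum_ite_eq' Finset.univ ((p.1, p.2 + c)) _]
    simp only [Finset.mem_univ, if_true]
  simp only [Matrix.sum_apply, hentry]
  have hc : ∀ c : Fin d,
      ∑ b : Fin d, ω d ^ (b.val * (p.2 + c).val) * X (p.1, p.2 + c) (q.1, q.2 - c)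
        * (ω d ^ (b.val * q.2.val))⁻¹
      = X (p.1, p.2 + c) (q.1, q.2 - c) * (if p.2 + c = q.2 then (d : ℂ) else 0) := by
    intro c
    rw [← key_b_sum (p.2 + c) q.2, Finset.mul_sum]
    congr 1
    funext b
    ring
  simp only [hc]
  have hcond : ∀ c : Fin d, (p.2 + c = q.2) = (c = q.2 - p.2) := by
    intro c
    apply propext
    constructor
    · intro h; rw [← h]; simp
    · intro h; rw [h]; simp
  simp only [hcond, mul_ite, mul_zero]
  rw [Finset.sum_ite_eq' Finset.univ (q.2 - p.2) _]
  simp only [Finset.mem_univ, if_true]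
  have e1 : p.2 + (q.2 - p.2) = q.2 := by simp
  have e2 : q.2 - (q.2 - p.2) = p.2 := by simp
  rw [e1, e2, Matrix.smul_apply, smul_eq_mul]
  simp [ptB, mul_comm]

end TNP

/-- For any Hermitian bipartite matrix `X`,
`‖X^{T_B}‖₁ ≤ d_B · ‖X‖₁`. -/
theorem traceNorm_ptB_le {dA dB : ℕ}
    (X : BMat (Fin dA) (Fin dB)) (hX : X.IsHermitian) :
    traceNorm (ptB X) ≤ dB * traceNorm X := by
  rcases Nat.eq_zero_or_pos dB with hd0 | hdpos
  · subst hd0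
    have h0 : ∀ M : Matrix (Fin dA × Fin 0) (Fin dA × Fin 0) ℂ, traceNorm M = 0 := by
      intro M
      simp [traceNorm, Matrix.trace]
    rw [h0, h0]
    simp
  · haveI : NeZero dB := ⟨hdpos.ne'⟩
    have hpt : (ptB X).IsHermitian := by
      show Matrix.conjTranspose (ptB X) = ptB X
      ext p q
      rw [Matrix.conjTranspose_apply]
      show star (X (q.1, p.2) (p.1, q.2)) = X (p.1, q.2) (q.1, p.2)
      rw [← Matrix.conjTranspose_apply, hX.eq]
    obtain ⟨W, hW, hWtr⟩ := TNP.exists_sign_unitary hpt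
    have key : (dB : ℝ) * traceNorm (ptB X) ≤ (dB : ℝ) * ((dB : ℝ) * traceNorm X) := by
      have e1 : ((W * ((dB : ℂ) • ptB X)).trace).re = (dB : ℝ) * traceNorm (ptB X) := by
        rw [Matrix.mul_smul, Matrix.trace_smul, smul_eq_mul, ← hWtr]
        simp [Complex.mul_re]
      calc (dB : ℝ) * traceNorm (ptB X)
          = ((W * ((dB : ℂ) • ptB X)).trace).re := e1.symm
        _ = ((W * (∑ c : Fin dB, ∑ b : Fin dB, TNP.Vm dA c b * X * TNP.Wm dA c b)).trace).re := by
            rw [TNP.decomp X]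
        _ = ∑ c : Fin dB, ∑ b : Fin dB,
              ((W * (TNP.Vm dA c b * X * TNP.Wm dA c b)).trace).re := by
            simp only [Matrix.mul_sum, Matrix.trace_sum, Complex.re_sum]
        _ ≤ ∑ _c : Fin dB, ∑ _b : Fin dB, traceNorm X := by
            refine Finset.sum_le_sum fun c _ => Finset.sum_le_sum fun b _ => ?_
            have h3 : (W * (TNP.Vm dA c b * X * TNP.Wm dA c b)).trace
                = ((TNP.Wm dA c b * W * TNP.Vm dA c b) * X).trace := by
              rw [show W * (TNP.Vm dA c b * X * TNP.Wm dA c b)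
                  = (W * TNP.Vm dA c b * X) * TNP.Wm dA c b by simp only [mul_assoc]]
              rw [Matrix.trace_mul_comm]
              rw [show TNP.Wm dA c b * (W * TNP.Vm dA c b * X)
                  = (TNP.Wm dA c b * W * TNP.Vm dA c b) * X by simp only [mul_assoc]]
            rw [h3]
            exact TNP.re_trace_mul_le hX
              (TNP.mul3_isometry (TNP.Wm_isometry c b) hW (TNP.Vm_isometry c b))
        _ = (dB : ℝ) * ((dB : ℝ) * traceNorm X) := by
            simp [Finset.sum_const, Finset.card_univ, nsmul_eq_mul, mul_assoc]
    exact le_of_mul_le_mul_left key (by exact_mod_cast hdpos)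

end
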